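/- Let H be a subgroup of a direct product P = F₁ × ⋯ × Fₘ of groups that projects onto each factor (a subdirect product). For i = 1,…,m let ρᵢ : P → Fᵢ be the canonical projection and set Nᵢ = H ∩ ker ρᵢ. Then for distinct indices i, j, the image of H under the projection ρᵢⱼ : P → Fᵢ × Fⱼ has finite index in Fᵢ × Fⱼ if and only if Nᵢ·Nⱼ has finite index in H. -/

import Mathlib

/-- For a subdirect product, `relindex (NᵢNⱼ) H` equals the index of `ρᵢ(Nⱼ)` in `Fᵢ`. -/
lemma aux_relindex {m : ℕ} (F : Fin m → Type*) [∀ i, Group (F i)]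
    (H : Subgroup (∀ i, F i)) (i j : Fin m)
    (hi : H.map (Pi.evalMonoidHom F i) = ⊤) :
    ((H ⊓ (Pi.evalMonoidHom F i).ker) ⊔ (H ⊓ (Pi.evalMonoidHom F j).ker)).relIndex H
      = ((H ⊓ (Pi.evalMonoidHom F j).ker).map (Pi.evalMonoidHom F i)).index := by
  set ρi := Pi.evalMonoidHom F i
  set ρj := Pi.evalMonoidHom F j
  set Ni := H ⊓ ρi.ker
  set Nj := H ⊓ ρj.ker
  set fi : H →* F i := ρi.comp H.subtype with hfi
  have hsurj : Function.Surjective fi := by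
    rw [← MonoidHom.range_eq_top, hfi, MonoidHom.range_comp, Subgroup.range_subtype]
    exact hi
  have hker : fi.ker ≤ (Ni ⊔ Nj).subgroupOf H := by
    intro x hx
    have : (x : ∀ i, F i) ∈ Ni := ⟨x.2, hx⟩
    exact Subgroup.mem_subgroupOf.mpr (Subgroup.mem_sup_left this)
  have hmap : ((Ni ⊔ Nj).subgroupOf H).map fi = Nj.map ρi := by
    rw [hfi, ← Subgroup.map_map, Subgroup.subgroupOf_map_subtype,
      inf_of_le_left (sup_le inf_le_left inf_le_left), Subgroup.map_sup,
      (Subgroup.map_eq_bot_iff _).mpr inf_le_right, bot_sup_eq]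
  rw [Subgroup.relIndex, ← Subgroup.index_map_eq _ hsurj hker, hmap]

/-- For a subdirect product `H ≤ F₁ × ⋯ × Fₘ`, the projection of `H` to
`Fᵢ × Fⱼ` has finite index iff `NᵢNⱼ` has finite index in `H`, where `Nᵢ = H ∩ ker ρᵢ`. -/
theorem stmt_0 {m : ℕ} (F : Fin m → Type*) [∀ i, Group (F i)]
    (H : Subgroup (∀ i, F i))
    (hsub : ∀ i, H.map (Pi.evalMonoidHom F i) = ⊤)
    (i j : Fin m) (hij : i ≠ j) :
    (H.map ((Pi.evalMonoidHom F i).prod (Pi.evalMonoidHom F j))).index ≠ 0 ↔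
      (((H ⊓ (Pi.evalMonoidHom F i).ker) ⊔ (H ⊓ (Pi.evalMonoidHom F j).ker)).relIndex H) ≠ 0 := by
  set ρi := Pi.evalMonoidHom F i with hρi
  set ρj := Pi.evalMonoidHom F j with hρj
  set Ni := H ⊓ ρi.ker with hNi
  set Nj := H ⊓ ρj.ker with hNj
  set D := H.map (ρi.prod ρj) with hD
  set Li := Nj.map ρi with hLi
  set Lj := Ni.map ρj with hLj
  have hA : (Ni ⊔ Nj).relIndex H = Li.index := aux_relindex F H i j (hsub i)
  have hA' : (Ni ⊔ Nj).relIndex H = Lj.index := by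
    rw [sup_comm]; exact aux_relindex F H j i (hsub j)
  -- Li = D.comap inl
  have hC : Li = D.comap (MonoidHom.inl (F i) (F j)) := by
    ext x
    simp only [hLi, hD, Subgroup.mem_comap, Subgroup.mem_map, MonoidHom.inl_apply,
      MonoidHom.prod_apply, Prod.mk.injEq, hNj, Subgroup.mem_inf, MonoidHom.mem_ker]
    constructor
    · rintro ⟨h, ⟨hH, hkj⟩, rfl⟩
      exact ⟨h, hH, rfl, hkj⟩
    · rintro ⟨h, hH, rfl, hkj⟩
      exact ⟨h, ⟨hH, hkj⟩, rfl⟩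
  -- Li × Lj ≤ D
  have hB : Li.prod Lj ≤ D := by
    rintro ⟨x, y⟩ ⟨hx, hy⟩
    obtain ⟨a, ⟨haH, haj⟩, rfl⟩ := hx
    obtain ⟨b, ⟨hbH, hbi⟩, rfl⟩ := hy
    refine ⟨a * b, mul_mem haH hbH, ?_⟩
    have haj' : ρj a = 1 := haj
    have hbi' : ρi b = 1 := hbi
    simp [MonoidHom.prod_apply, hbi', haj']
  rw [hA]
  constructor
  · intro hDind
    have : D.FiniteIndex := ⟨hDind⟩
    rw [hC, Subgroup.index_comap]
    exact Subgroup.FiniteIndex.index_ne_zero (H := D.subgroupOf (MonoidHom.inl (F i) (F j)).range)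
  · intro hLind
    have hLjind : Lj.index ≠ 0 := hA' ▸ hA ▸ hLind
    have hprod : (Li.prod Lj).index ≠ 0 := by
      rw [Subgroup.index_prod]; exact mul_ne_zero hLind hLjind
    intro h0
    exact hprod (Nat.eq_zero_of_zero_dvd (h0 ▸ Subgroup.index_dvd_of_le hB))
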